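/- Consider IDCA applied to the DC-constrained problem with all fᵢ± μ-strongly convex and M-Lipschitz on W, uniform Slater margin ν > 0, lower bound f_lb on f₀ over W, and feasible initialization. If each iterate w^{(k+1)} is an ε_k-optimal solution of the convexified subproblem with ε_k = (μ/8)·min{1, 1/(4M²), μν/(8M⁴)}·ε², and w^{(k)} is feasible but not a nearly ε-KKT point, then the next iterate is feasible: fᵢ(w^{(k+1)}) ≤ 0 for all i ∈ [m]. -/

import Mathlib

open scoped RealInnerProductSpace
open Finset

/-- `s` is a subgradient of `f` at `x`. -/
def IsSubgradientAt {n : ℕ} (f : EuclideanSpace ℝ (Fin n) → ℝ)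
    (x s : EuclideanSpace ℝ (Fin n)) : Prop :=
  ∀ v, f x + ⟪s, v - x⟫ ≤ f v

/-- `z` belongs to the normal cone of `W` at `x`. -/
def InNormalCone {n : ℕ} (W : Set (EuclideanSpace ℝ (Fin n)))
    (x z : EuclideanSpace ℝ (Fin n)) : Prop :=
  ∀ v ∈ W, ⟪z, v - x⟫ ≤ 0

/-- `w` is a nearly ε-KKT point of the DC-constrained problem
`min f₀⁺ − f₀⁻ s.t. fᵢ⁺ − fᵢ⁻ ≤ 0 over W` (Definition 6.2 of the paper):
there are `ŵ ∈ W` with `‖ŵ − w‖ ≤ ε`, subgradients of the `fᵢ⁺` at `ŵ` and of the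
`fᵢ⁻` at `w`, a normal cone element at `ŵ`, and multipliers `λᵢ ≥ 0` realizing
ε-stationarity, ε-feasibility and ε-complementary slackness. -/
def NearlyKKT {n m : ℕ} (W : Set (EuclideanSpace ℝ (Fin n)))
    (f0p f0m : EuclideanSpace ℝ (Fin n) → ℝ)
    (fp fm : Fin m → EuclideanSpace ℝ (Fin n) → ℝ)
    (ε : ℝ) (w : EuclideanSpace ℝ (Fin n)) : Prop :=
  w ∈ W ∧
  ∃ what ∈ W, ‖what - w‖ ≤ ε ∧
    ∃ (u0 : EuclideanSpace ℝ (Fin n)) (u : Fin m → EuclideanSpace ℝ (Fin n))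
      (s0 : EuclideanSpace ℝ (Fin n)) (s : Fin m → EuclideanSpace ℝ (Fin n))
      (nW : EuclideanSpace ℝ (Fin n)) (lam : Fin m → ℝ),
      IsSubgradientAt f0p what u0 ∧ (∀ i, IsSubgradientAt (fp i) what (u i)) ∧
      IsSubgradientAt f0m w s0 ∧ (∀ i, IsSubgradientAt (fm i) w (s i)) ∧
      InNormalCone W what nW ∧ (∀ i, 0 ≤ lam i) ∧
      ‖u0 - s0 + ∑ i, lam i • (u i - s i) + nW‖ ≤ ε ∧
      (∀ i, fp i w - fm i w ≤ ε) ∧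
      (∀ i, |lam i * (fp i w - fm i w)| ≤ ε)

/- ---------------- auxiliary lemmas ---------------- -/

lemma limit_trick {c B : ℝ} (h : ∀ t : ℝ, 0 < t → t < 1 → (1 - t) * c ≤ B) : c ≤ B := by
  by_contra hlt
  push_neg at hlt
  have h2 := h (1/2) (by norm_num) (by norm_num)
  have hc : 0 < c := by linarith
  have ht0 : 0 < (c - B) / (2 * c) := div_pos (by linarith) (by linarith)
  have ht1 : (c - B) / (2 * c) < 1 := by
    rw [div_lt_one (by positivity)]; linarith
  have := h _ ht0 ht1
  have heq : (1 - (c - B) / (2 * c)) * c = (c + B) / 2 := by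
    field_simp; ring
  rw [heq] at this
  linarith

lemma lin_unbounded {k d u : ℝ} (hd : 0 < d) (h : ∀ T : ℝ, 1 ≤ T → k + T * d < u) : False := by
  set T : ℝ := max 1 ((u - k) / d + 1) with hT
  have h1 := h T (le_max_left _ _)
  have h2 : (u - k) / d + 1 ≤ T := le_max_right _ _
  have h3 : ((u - k) / d + 1) * d ≤ T * d := mul_le_mul_of_nonneg_right h2 hd.le
  have h4 : ((u - k) / d + 1) * d = (u - k) + d := by field_simp
  linarith

lemma small_slack {X u D : ℝ} (hD : 0 ≤ D) (h : ∀ t : ℝ, 0 < t → t ≤ 1 → X < u + t * D) :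
    X ≤ u := by
  by_contra hlt
  push_neg at hlt
  set t : ℝ := min 1 ((X - u) / (2 * (D + 1))) with ht
  have ht0 : 0 < t := lt_min one_pos (div_pos (by linarith) (by linarith))
  have ht1 : t ≤ 1 := min_le_left _ _
  have h1 := h t ht0 ht1
  have h2 : t ≤ (X - u) / (2 * (D + 1)) := min_le_right _ _
  have h3 : t * D ≤ (X - u) / (2 * (D + 1)) * D := mul_le_mul_of_nonneg_right h2 hD
  have h4 : (X - u) / (2 * (D + 1)) * D < X - u := by
    rw [div_mul_eq_mul_div, div_lt_iff₀ (by linarith)]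
    nlinarith
  linarith

lemma combo_lt {a b x y c : ℝ} (ha : 0 ≤ a) (hb : 0 ≤ b) (hab : a + b = 1)
    (hx : x < c) (hy : y < c) : a * x + b * y < c := by
  rcases eq_or_lt_of_le ha with rfl0 | ha'
  · have hb1 : b = 1 := by linarith
    rw [← rfl0, hb1]; linarith
  · have hacbc : a * c + b * c = c := by rw [← add_mul, hab, one_mul]
    nlinarith [mul_lt_mul_of_pos_left hx ha', mul_le_mul_of_nonneg_left hy.le hb]

/-- Existence of a subgradient (as a continuous linear functional) at a minimizer
of a continuous convex function over a convex set, with the normal-cone inequality. -/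
lemma exists_subgrad_functional {P : Type*} [NormedAddCommGroup P] [NormedSpace ℝ P]
    (φ : P → ℝ) (hφc : Continuous φ)
    (hφ : ∀ x y : P, ∀ a b : ℝ, 0 ≤ a → 0 ≤ b → a + b = 1 →
      φ (a • x + b • y) ≤ a * φ x + b * φ y)
    (C : Set P) (hC : Convex ℝ C) (xh : P) (hxh : xh ∈ C) (hmin : ∀ v ∈ C, φ xh ≤ φ v) :
    ∃ p : P →L[ℝ] ℝ, (∀ v, φ xh + p (v - xh) ≤ φ v) ∧ (∀ v ∈ C, 0 ≤ p (v - xh)) := by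
  classical
  set A : Set (P × ℝ) := {q | φ q.1 < q.2} with hA
  set B : Set (P × ℝ) := {q | q.1 ∈ C ∧ q.2 ≤ φ xh} with hB
  have hAopen : IsOpen A := isOpen_lt (hφc.comp continuous_fst) continuous_snd
  have hAconv : Convex ℝ A := by
    intro q hq q' hq' a b ha hb hab
    simp only [hA, Set.mem_setOf_eq] at *
    have h1 := hφ q.1 q'.1 a b ha hb hab
    have : a * φ q.1 + b * φ q'.1 < a * q.2 + b * q'.2 := by
      rcases eq_or_lt_of_le ha with rfl2 | ha'
      · have hb1 : b = 1 := by linarith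
        simp only [← rfl2, hb1] at *
        nlinarith [hq']
      · nlinarith [mul_le_mul_of_nonneg_left hq'.le hb]
    calc φ ((a • q + b • q').1) = φ (a • q.1 + b • q'.1) := rfl
      _ ≤ a * φ q.1 + b * φ q'.1 := h1
      _ < a * q.2 + b * q'.2 := this
      _ = (a • q + b • q').2 := rfl
  have hBconv : Convex ℝ B := by
    intro q hq q' hq' a b ha hb hab
    refine ⟨hC hq.1 hq'.1 ha hb hab, ?_⟩
    have : a * q.2 + b * q'.2 ≤ a * φ xh + b * φ xh := by
      have := mul_le_mul_of_nonneg_left hq.2 ha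
      have := mul_le_mul_of_nonneg_left hq'.2 hb
      linarith
    calc (a • q + b • q').2 = a * q.2 + b * q'.2 := rfl
      _ ≤ a * φ xh + b * φ xh := this
      _ = φ xh := by rw [← add_mul, hab, one_mul]
  have hdisj : Disjoint A B := by
    rw [Set.disjoint_left]
    rintro q hqA ⟨hq1, hq2⟩
    exact absurd (hmin q.1 hq1) (by simp only [hA, Set.mem_setOf_eq] at hqA; linarith)
  obtain ⟨f, u, hfA, hfB⟩ := geometric_hahn_banach_open hAconv hAopen hBconv hdisj
  set a₀ : ℝ := f (0, 1) with ha₀def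
  have hfval : ∀ (v : P) (t : ℝ), f (v, t) = f (v, 0) + t * a₀ := by
    intro v t
    have : (v, t) = (v, (0:ℝ)) + t • ((0:P), (1:ℝ)) := by
      simp [Prod.ext_iff]
    rw [this, map_add, map_smul]
    simp [ha₀def]
  have hfA' : ∀ (v : P) (t : ℝ), φ v < t → f (v, 0) + t * a₀ < u := by
    intro v t hvt
    have := hfA (v, t) hvt
    rwa [hfval] at this
  have hfB' : ∀ v ∈ C, u ≤ f (v, 0) + φ xh * a₀ := by
    intro v hv
    have := hfB (v, φ xh) ⟨hv, le_refl _⟩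
    rwa [hfval] at this
  have ha₀ne : a₀ ≠ 0 := by
    intro h0
    have h1 : ∀ v : P, f (v, 0) < u := fun v => by
      have := hfA' v (φ v + 1) (by linarith)
      rwa [h0, mul_zero, add_zero] at this
    have h2 := hfB' xh hxh
    rw [h0, mul_zero, add_zero] at h2
    exact absurd (h1 xh) (not_lt.2 h2)
  have ha₀le : a₀ ≤ 0 := by
    by_contra hpos
    push_neg at hpos
    set T : ℝ := max 1 ((u - f (xh, 0) - φ xh * a₀) / a₀ + 1) with hT
    have hT1 : φ xh < φ xh + T := by
      have : (1:ℝ) ≤ T := le_max_left _ _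
      linarith
    have hlt := hfA' xh (φ xh + T) hT1
    have hTge : (u - f (xh, 0) - φ xh * a₀) / a₀ + 1 ≤ T := le_max_right _ _
    have : u - f (xh, 0) - φ xh * a₀ + a₀ ≤ T * a₀ := by
      have := mul_le_mul_of_nonneg_right hTge (le_of_lt hpos)
      calc u - f (xh, 0) - φ xh * a₀ + a₀
          = ((u - f (xh, 0) - φ xh * a₀) / a₀ + 1) * a₀ := by field_simp
        _ ≤ T * a₀ := this
    nlinarith
  have ha₀ : a₀ < 0 := lt_of_le_of_ne ha₀le ha₀ne
  have hkey : ∀ v : P, f (v, 0) + φ v * a₀ ≤ u := by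
    intro v
    by_contra hgt
    push_neg at hgt
    set δ : ℝ := (f (v, 0) + φ v * a₀ - u) / (2 * (-a₀)) with hδ
    have hδpos : 0 < δ := div_pos (by linarith) (by linarith)
    have hlt := hfA' v (φ v + δ) (by linarith)
    have hexp : f (v, 0) + (φ v + δ) * a₀ = f (v, 0) + φ v * a₀ + δ * a₀ := by ring
    rw [hexp] at hlt
    have hda : δ * a₀ = -((f (v, 0) + φ v * a₀ - u) / 2) := by
      rw [hδ]; field_simp
    rw [hda] at hlt
    linarith
  refine ⟨(-a₀)⁻¹ • (f.comp (ContinuousLinearMap.inl ℝ P ℝ)), ?_, ?_⟩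
  · intro v
    have h1 := hkey v
    have h2 := hfB' xh hxh
    have hdiff : f (v, 0) - f (xh, 0) ≤ (φ xh - φ v) * a₀ := by linarith
    have happ : ((-a₀)⁻¹ • (f.comp (ContinuousLinearMap.inl ℝ P ℝ))) (v - xh)
        = (-a₀)⁻¹ * (f (v, 0) - f (xh, 0)) := by
      simp only [ContinuousLinearMap.smul_apply, ContinuousLinearMap.comp_apply,
        ContinuousLinearMap.inl_apply, smul_eq_mul]
      rw [show ((v - xh, (0:ℝ)) : P × ℝ) = (v, 0) - (xh, 0) by simp [Prod.ext_iff], map_sub]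
    rw [happ]
    have hinv : 0 < (-a₀)⁻¹ := inv_pos.2 (by linarith)
    have := mul_le_mul_of_nonneg_left hdiff (le_of_lt hinv)
    have heq2 : (-a₀)⁻¹ * ((φ xh - φ v) * a₀) = φ v - φ xh := by
      field_simp
      ring_nf
    rw [heq2] at this
    linarith
  · intro v hv
    have h1 := hkey xh
    have h2 := hfB' v hv
    have hdiff : 0 ≤ f (v, 0) - f (xh, 0) := by linarith
    have happ : ((-a₀)⁻¹ • (f.comp (ContinuousLinearMap.inl ℝ P ℝ))) (v - xh)
        = (-a₀)⁻¹ * (f (v, 0) - f (xh, 0)) := by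
      simp only [ContinuousLinearMap.smul_apply, ContinuousLinearMap.comp_apply,
        ContinuousLinearMap.inl_apply, smul_eq_mul]
      rw [show ((v - xh, (0:ℝ)) : P × ℝ) = (v, 0) - (xh, 0) by simp [Prod.ext_iff], map_sub]
    rw [happ]
    have hinv : 0 ≤ (-a₀)⁻¹ := le_of_lt (inv_pos.2 (by linarith))
    exact mul_nonneg hinv hdiff

lemma strong_subgrad {n : ℕ} {μ : ℝ} {f : EuclideanSpace ℝ (Fin n) → ℝ}
    (hf : StrongConvexOn Set.univ μ f) {x sg : EuclideanSpace ℝ (Fin n)}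
    (hsg : IsSubgradientAt f x sg) (v : EuclideanSpace ℝ (Fin n)) :
    f x + ⟪sg, v - x⟫ + μ / 2 * ‖v - x‖ ^ 2 ≤ f v := by
  have key : ∀ t : ℝ, 0 < t → t < 1 →
      (1 - t) * (μ / 2 * ‖v - x‖ ^ 2) ≤ f v - f x - ⟪sg, v - x⟫ := by
    intro t ht0 ht1
    have hcomb := hf.2 (Set.mem_univ x) (Set.mem_univ v)
      (by linarith : (0:ℝ) ≤ 1 - t) ht0.le (by ring)
    have hz := hsg ((1 - t) • x + t • v)
    have hzx : (1 - t) • x + t • v - x = t • (v - x) := by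
      rw [smul_sub, sub_smul, one_smul]; abel
    rw [hzx, real_inner_smul_right] at hz
    rw [norm_sub_rev x v] at hcomb
    simp only [smul_eq_mul] at hcomb
    have hmul : t * ((1 - t) * (μ / 2 * ‖v - x‖ ^ 2)) ≤ t * (f v - f x - ⟪sg, v - x⟫) := by
      nlinarith [hz, hcomb]
    exact le_of_mul_le_mul_left hmul ht0
  have := limit_trick key
  linarith

lemma kkt_multipliers {m : ℕ} {E : Type*} [NormedAddCommGroup E] [NormedSpace ℝ E]
    {W : Set E} (hWconv : Convex ℝ W)
    (g0 : E → ℝ) (g : Fin m → E → ℝ)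
    (hg0conv : ∀ x y : E, ∀ a b : ℝ, 0 ≤ a → 0 ≤ b → a + b = 1 →
      g0 (a • x + b • y) ≤ a * g0 x + b * g0 y)
    (hgconv : ∀ i, ∀ x y : E, ∀ a b : ℝ, 0 ≤ a → 0 ≤ b → a + b = 1 →
      g i (a • x + b • y) ≤ a * g i x + b * g i y)
    {what : E} (hwhatW : what ∈ W) (hwhatfeas : ∀ i, g i what ≤ 0)
    (hwhatopt : ∀ v ∈ W, (∀ i, g i v ≤ 0) → g0 what ≤ g0 v)
    {ν : ℝ} (hν : 0 < ν) {vs : E} (hvsW : vs ∈ W) (hvs : ∀ i, g i vs ≤ -ν) :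
    ∃ lam : Fin m → ℝ, (∀ i, 0 ≤ lam i) ∧ (∀ i, lam i * g i what = 0) ∧
      (∀ v ∈ W, g0 what ≤ g0 v + ∑ i, lam i * g i v) := by
  classical
  set A : Set (ℝ × (Fin m → ℝ)) := {q | ∃ v ∈ W, g0 v ≤ q.1 ∧ ∀ i, g i v ≤ q.2 i} with hAdef
  set B : Set (ℝ × (Fin m → ℝ)) := {q | q.1 < g0 what ∧ ∀ i, q.2 i < 0} with hBdef
  have hBopen : IsOpen B := by
    have hset : B = {q : ℝ × (Fin m → ℝ) | q.1 < g0 what} ∩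
        ⋂ i, {q : ℝ × (Fin m → ℝ) | q.2 i < 0} := by
      ext q; simp [hBdef, Set.mem_iInter]
    rw [hset]
    exact (isOpen_lt continuous_fst continuous_const).inter
      (isOpen_iInter_of_finite fun i =>
        isOpen_lt ((continuous_apply i).comp continuous_snd) continuous_const)
  have hBconv : Convex ℝ B := by
    intro q hq q' hq' a b ha hb hab
    constructor
    · have h := combo_lt ha hb hab hq.1 hq'.1
      simpa using h
    · intro i
      have h := combo_lt ha hb hab (hq.2 i) (hq'.2 i)
      simpa using h
  have hAconv : Convex ℝ A := by
    rintro q ⟨v, hvW, hv1, hv2⟩ q' ⟨v', hvW', hv1', hv2'⟩ a b ha hb hab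
    refine ⟨a • v + b • v', hWconv hvW hvW' ha hb hab, ?_, ?_⟩
    · have h := hg0conv v v' a b ha hb hab
      have h2 : a * g0 v + b * g0 v' ≤ a * q.1 + b * q'.1 :=
        add_le_add (mul_le_mul_of_nonneg_left hv1 ha) (mul_le_mul_of_nonneg_left hv1' hb)
      simpa using le_trans h h2
    · intro i
      have h := hgconv i v v' a b ha hb hab
      have h2 : a * g i v + b * g i v' ≤ a * q.2 i + b * q'.2 i :=
        add_le_add (mul_le_mul_of_nonneg_left (hv2 i) ha)
          (mul_le_mul_of_nonneg_left (hv2' i) hb)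
      simpa using le_trans h h2
  have hdisj : Disjoint B A := by
    rw [Set.disjoint_left]
    rintro q ⟨hq1, hq2⟩ ⟨v, hvW, hv1, hv2⟩
    have hfeas : ∀ i, g i v ≤ 0 := fun i => le_of_lt (lt_of_le_of_lt (hv2 i) (hq2 i))
    have := hwhatopt v hvW hfeas
    linarith
  obtain ⟨f, u, hfB, hfA⟩ := geometric_hahn_banach_open hBconv hBopen hAconv hdisj
  set a₀ : ℝ := f (1, 0) with ha₀def
  set bv : Fin m → ℝ := fun i => f (0, Pi.single i 1) with hbvdef
  have hfq : ∀ q : ℝ × (Fin m → ℝ), f q = a₀ * q.1 + ∑ i, bv i * q.2 i := by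
    intro q
    have h1 : f ((q.1, 0) : ℝ × (Fin m → ℝ)) = a₀ * q.1 := by
      rw [show ((q.1, 0) : ℝ × (Fin m → ℝ)) = q.1 • ((1:ℝ), (0 : Fin m → ℝ)) by
        simp [Prod.ext_iff], map_smul]
      simp [ha₀def, mul_comm]
    have h2 : f ((0, q.2) : ℝ × (Fin m → ℝ)) = ∑ i, bv i * q.2 i := by
      have e2 : ((0, q.2) : ℝ × (Fin m → ℝ))
          = ∑ i, ((0:ℝ), (Pi.single i (q.2 i) : Fin m → ℝ)) := by
        calc ((0, q.2) : ℝ × (Fin m → ℝ))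
            = (ContinuousLinearMap.inr ℝ ℝ (Fin m → ℝ)) q.2 := by simp
          _ = (ContinuousLinearMap.inr ℝ ℝ (Fin m → ℝ)) (∑ i, Pi.single i (q.2 i)) := by
              rw [Finset.univ_sum_single]
          _ = ∑ i, (ContinuousLinearMap.inr ℝ ℝ (Fin m → ℝ)) (Pi.single i (q.2 i)) :=
              map_sum _ _ _
          _ = ∑ i, ((0:ℝ), (Pi.single i (q.2 i) : Fin m → ℝ)) := by simp
      rw [e2, map_sum]
      refine Finset.sum_congr rfl fun i _ => ?_
      have e3 : ((0:ℝ), (Pi.single i (q.2 i) : Fin m → ℝ))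
          = (q.2 i) • ((0:ℝ), (Pi.single i 1 : Fin m → ℝ)) := by
        refine Prod.ext (by simp) ?_
        simp only [Prod.smul_snd]
        funext j
        by_cases hj : j = i
        · subst hj; simp
        · simp [Pi.single_eq_of_ne hj]
      rw [e3, map_smul]
      simp [hbvdef, mul_comm]
    calc f q = f (((q.1, 0) : ℝ × (Fin m → ℝ)) + ((0, q.2) : ℝ × (Fin m → ℝ))) := by
          rw [show (((q.1, 0) : ℝ × (Fin m → ℝ)) + ((0, q.2) : ℝ × (Fin m → ℝ))) = q by simp]
      _ = a₀ * q.1 + ∑ i, bv i * q.2 i := by rw [map_add, h1, h2]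
  clear_value a₀ bv
  have hBside : ∀ t t' : ℝ, 0 < t → 0 < t' →
      a₀ * (g0 what - t) + ∑ i, bv i * (-t') < u := by
    intro t t' ht ht'
    have hmem : ((g0 what - t, fun _ => -t') : ℝ × (Fin m → ℝ)) ∈ B :=
      ⟨by simp; linarith, fun i => by simp; linarith⟩
    have := hfB _ hmem
    rwa [hfq] at this
  have hbvnn : ∀ i, 0 ≤ bv i := by
    intro i
    by_contra hneg
    push_neg at hneg
    have hpt : ∀ T : ℝ, 1 ≤ T →
        (a₀ * (g0 what - 1) + ∑ j ∈ Finset.univ.erase i, bv j * (-1)) + T * (-bv i) < u := by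
      intro T hT
      set z : Fin m → ℝ := Function.update (fun _ => (-1:ℝ)) i (-T) with hz
      have hmem : ((g0 what - 1, z) : ℝ × (Fin m → ℝ)) ∈ B := by
        refine ⟨by simp, fun j => ?_⟩
        by_cases hj : j = i
        · subst hj
          show z j < 0
          rw [hz, Function.update_self]; linarith
        · show z j < 0
          rw [hz, Function.update_of_ne hj]; norm_num
      have hval := hfB _ hmem
      rw [hfq] at hval
      have hsum : ∑ j, bv j * z j
          = (∑ j ∈ Finset.univ.erase i, bv j * (-1)) + bv i * (-T) := by
        rw [← Finset.sum_erase_add _ _ (Finset.mem_univ i)]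
        congr 1
        · refine Finset.sum_congr rfl fun j hj => ?_
          rw [hz, Function.update_of_ne (Finset.ne_of_mem_erase hj)]
        · rw [hz, Function.update_self]
      rw [hsum] at hval
      have hval2 : a₀ * (g0 what - 1)
          + (∑ j ∈ Finset.univ.erase i, bv j * (-1) + bv i * (-T)) < u := hval
      linarith [hval2]
    exact lin_unbounded (by linarith : (0:ℝ) < -bv i) hpt
  have ha₀nn : 0 ≤ a₀ := by
    by_contra hneg
    push_neg at hneg
    have hpt : ∀ T : ℝ, 1 ≤ T →
        (a₀ * g0 what + ∑ j, bv j * (-1)) + T * (-a₀) < u := by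
      intro T hT
      have h := hBside T 1 (by linarith) one_pos
      have : a₀ * (g0 what - T) = a₀ * g0 what + T * (-a₀) := by ring
      linarith [h, this]
    exact lin_unbounded (by linarith : (0:ℝ) < -a₀) hpt
  have hsumbv : 0 ≤ ∑ i, bv i := Finset.sum_nonneg fun i _ => hbvnn i
  have hu_lb : a₀ * g0 what ≤ u := by
    refine small_slack (D := a₀ + ∑ i, bv i) (by linarith) ?_
    intro t ht0 ht1
    have h := hBside t t ht0 ht0
    have hring : a₀ * (g0 what - t) + ∑ i, bv i * (-t)
        = a₀ * g0 what - t * (a₀ + ∑ i, bv i) := by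
      rw [show (∑ i, bv i * (-t)) = (∑ i, bv i) * (-t) by rw [Finset.sum_mul]]
      ring
    rw [hring] at h
    linarith
  have hAside : ∀ v ∈ W, u ≤ a₀ * g0 v + ∑ i, bv i * g i v := by
    intro v hv
    have hmem : ((g0 v, fun i => g i v) : ℝ × (Fin m → ℝ)) ∈ A :=
      ⟨v, hv, le_refl _, fun i => le_refl _⟩
    have := hfA _ hmem
    rwa [hfq] at this
  have ha₀pos : 0 < a₀ := by
    rcases eq_or_lt_of_le ha₀nn with h0 | h
    swap
    · exact h
    exfalso
    have h1 : u ≤ ∑ i, bv i * g i vs := by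
      have := hAside vs hvsW
      rw [← h0, zero_mul, zero_add] at this
      exact this
    have h2 : ∑ i, bv i * g i vs ≤ ∑ i, bv i * (-ν) :=
      Finset.sum_le_sum fun i _ => mul_le_mul_of_nonneg_left (hvs i) (hbvnn i)
    have h3 : ∑ i, bv i * (-ν) = -ν * ∑ i, bv i := by
      rw [show (∑ i, bv i * (-ν)) = (∑ i, bv i) * (-ν) by rw [Finset.sum_mul]]
      ring
    have hu0 : 0 ≤ u := by
      have := hu_lb
      rw [← h0, zero_mul] at this
      exact this
    rcases eq_or_lt_of_le hsumbv with hz | hz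
    · have hbz : ∀ i, bv i = 0 := by
        intro i
        have := (Finset.sum_eq_zero_iff_of_nonneg (fun j _ => hbvnn j)).1 hz.symm
        exact this i (Finset.mem_univ i)
      have hB1 := hBside 1 1 one_pos one_pos
      have hsz : ∑ i, bv i * (-1:ℝ) = 0 := Finset.sum_eq_zero fun i _ => by
        rw [hbz i]; ring
      rw [hsz, ← h0] at hB1
      simp only [zero_mul, add_zero, zero_add] at hB1
      have hzz : -ν * ∑ i, bv i = 0 := by rw [← hz]; ring
      linarith
    · have hνS := mul_pos hν hz
      linarith
  refine ⟨fun i => bv i / a₀, fun i => div_nonneg (hbvnn i) ha₀nn, ?_, ?_⟩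
  · -- complementary slackness
    have hLmin : ∀ v ∈ W, g0 what ≤ g0 v + ∑ i, (bv i / a₀) * g i v := by
      intro v hv
      have h1 := hAside v hv
      have h3 : a₀ * (g0 v + ∑ i, (bv i / a₀) * g i v) = a₀ * g0 v + ∑ i, bv i * g i v := by
        rw [mul_add, Finset.mul_sum]
        congr 1
        refine Finset.sum_congr rfl fun j _ => ?_
        field_simp
      have h4 : a₀ * g0 what ≤ a₀ * (g0 v + ∑ i, (bv i / a₀) * g i v) := by
        rw [h3]; linarith [hu_lb]
      exact le_of_mul_le_mul_left h4 ha₀pos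
    have h0 := hLmin what hwhatW
    have hsum0 : 0 ≤ ∑ i, (bv i / a₀) * g i what := by linarith
    have hle : ∀ i ∈ Finset.univ, (bv i / a₀) * g i what ≤ 0 := fun i _ =>
      mul_nonpos_of_nonneg_of_nonpos (div_nonneg (hbvnn i) ha₀nn) (hwhatfeas i)
    have hzero : ∑ i, (bv i / a₀) * g i what = 0 :=
      le_antisymm (Finset.sum_nonpos hle) hsum0
    intro i
    exact (Finset.sum_eq_zero_iff_of_nonpos hle).1 hzero i (Finset.mem_univ i)
  · intro v hv
    have h1 := hAside v hv
    have h3 : a₀ * (g0 v + ∑ i, (bv i / a₀) * g i v) = a₀ * g0 v + ∑ i, bv i * g i v := by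
      rw [mul_add, Finset.mul_sum]
      congr 1
      refine Finset.sum_congr rfl fun j _ => ?_
      field_simp
    have h4 : a₀ * g0 what ≤ a₀ * (g0 v + ∑ i, (bv i / a₀) * g i v) := by
      rw [h3]; linarith [hu_lb]
    exact le_of_mul_le_mul_left h4 ha₀pos

lemma lagrangian_growth {E : Type*} [NormedAddCommGroup E] [NormedSpace ℝ E]
    {W : Set E} (hWconv : Convex ℝ W) (μS : ℝ) (L : E → ℝ)
    (hcombo : ∀ x y : E, ∀ a b : ℝ, 0 ≤ a → 0 ≤ b → a + b = 1 →
      L (a • x + b • y) ≤ a * L x + b * L y - a * b * (μS / 2 * ‖x - y‖ ^ 2))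
    {what : E} (hwhatW : what ∈ W) (hmin : ∀ v ∈ W, L what ≤ L v) :
    ∀ v ∈ W, L what + μS / 2 * ‖v - what‖ ^ 2 ≤ L v := by
  intro v hv
  have key : ∀ t : ℝ, 0 < t → t < 1 →
      (1 - t) * (μS / 2 * ‖v - what‖ ^ 2) ≤ L v - L what := by
    intro t ht0 ht1
    have hz := hmin _ (hWconv hwhatW hv (by linarith : (0:ℝ) ≤ 1 - t) ht0.le (by ring))
    have hcb := hcombo what v (1 - t) t (by linarith) ht0.le (by ring)
    rw [norm_sub_rev what v] at hcb
    have hmul : t * ((1 - t) * (μS / 2 * ‖v - what‖ ^ 2)) ≤ t * (L v - L what) := by nlinarith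
    exact le_of_mul_le_mul_left hmul ht0
  linarith [limit_trick key]

lemma kkt_stationarity {n m : ℕ}
    {W : Set (EuclideanSpace ℝ (Fin n))} (hWconv : Convex ℝ W)
    (f0p : EuclideanSpace ℝ (Fin n) → ℝ) (fp : Fin m → EuclideanSpace ℝ (Fin n) → ℝ)
    (hf0pc : Continuous f0p) (hfpc : ∀ i, Continuous (fp i))
    (hf0pcv : ConvexOn ℝ Set.univ f0p) (hfpcv : ∀ i, ConvexOn ℝ Set.univ (fp i))
    (s0 : EuclideanSpace ℝ (Fin n)) (s : Fin m → EuclideanSpace ℝ (Fin n))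
    (lam : Fin m → ℝ) (hlamnn : ∀ i, 0 ≤ lam i)
    {what : EuclideanSpace ℝ (Fin n)} (hwhatW : what ∈ W)
    (hmin : ∀ v ∈ W, (f0p what - ⟪s0, what⟫) + ∑ i, lam i * (fp i what - ⟪s i, what⟫)
        ≤ (f0p v - ⟪s0, v⟫) + ∑ i, lam i * (fp i v - ⟪s i, v⟫)) :
    ∃ (u0 : EuclideanSpace ℝ (Fin n)) (u : Fin m → EuclideanSpace ℝ (Fin n))
      (nW : EuclideanSpace ℝ (Fin n)),
      IsSubgradientAt f0p what u0 ∧ (∀ i, IsSubgradientAt (fp i) what (u i)) ∧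
      InNormalCone W what nW ∧ u0 - s0 + ∑ i, lam i • (u i - s i) + nW = 0 := by
  classical
  -- subgradient existence for each fp i (used when lam i = 0)
  have hsubex : ∀ (F : EuclideanSpace ℝ (Fin n) → ℝ), Continuous F → ConvexOn ℝ Set.univ F →
      ∃ uF, IsSubgradientAt F what uF := by
    intro F hFc hFcv
    obtain ⟨p, hp, -⟩ := exists_subgrad_functional F hFc
      (fun x y a b ha hb hab => by
        simpa [smul_eq_mul] using hFcv.2 (Set.mem_univ x) (Set.mem_univ y) ha hb hab)
      {what} (convex_singleton _) what rfl
      (by rintro v hv; rw [Set.mem_singleton_iff] at hv; subst hv; exact le_refl _)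
    refine ⟨(InnerProductSpace.toDual ℝ _).symm p, fun v => ?_⟩
    have := hp v
    rw [InnerProductSpace.toDual_symm_apply]
    exact this
  -- the product space
  set Φ : (EuclideanSpace ℝ (Fin n)) × (Fin m → EuclideanSpace ℝ (Fin n)) → ℝ :=
    fun q => (f0p q.1 - ⟪s0, q.1⟫) + ∑ i, lam i * (fp i (q.2 i) - ⟪s i, q.2 i⟫) with hΦdef
  have hΦcont : Continuous Φ := by
    apply Continuous.add
    · exact (hf0pc.comp continuous_fst).sub
        ((continuous_const.inner continuous_id).comp continuous_fst)
    · apply continuous_finset_sum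
      intro i _
      exact continuous_const.mul
        (((hfpc i).comp ((continuous_apply i).comp continuous_snd)).sub
          ((continuous_const.inner continuous_id).comp ((continuous_apply i).comp continuous_snd)))
  have hΦconv : ∀ x y : (EuclideanSpace ℝ (Fin n)) × (Fin m → EuclideanSpace ℝ (Fin n)),
      ∀ a b : ℝ, 0 ≤ a → 0 ≤ b → a + b = 1 → Φ (a • x + b • y) ≤ a * Φ x + b * Φ y := by
    intro x y a b ha hb hab
    have hx1 : (a • x + b • y).1 = a • x.1 + b • y.1 := rfl
    have hx2 : ∀ i, (a • x + b • y).2 i = a • (x.2 i) + b • (y.2 i) := fun i => rfl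
    have h0 : f0p ((a • x + b • y).1) - ⟪s0, (a • x + b • y).1⟫
        ≤ a * (f0p x.1 - ⟪s0, x.1⟫) + b * (f0p y.1 - ⟪s0, y.1⟫) := by
      rw [hx1, inner_add_right, real_inner_smul_right, real_inner_smul_right]
      have := hf0pcv.2 (Set.mem_univ x.1) (Set.mem_univ y.1) ha hb hab
      simp only [smul_eq_mul] at this
      linarith
    have hi : ∀ i, lam i * (fp i ((a • x + b • y).2 i) - ⟪s i, (a • x + b • y).2 i⟫)
        ≤ a * (lam i * (fp i (x.2 i) - ⟪s i, x.2 i⟫))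
          + b * (lam i * (fp i (y.2 i) - ⟪s i, y.2 i⟫)) := by
      intro i
      have h1 : fp i ((a • x + b • y).2 i) - ⟪s i, (a • x + b • y).2 i⟫
          ≤ a * (fp i (x.2 i) - ⟪s i, x.2 i⟫) + b * (fp i (y.2 i) - ⟪s i, y.2 i⟫) := by
        rw [hx2, inner_add_right, real_inner_smul_right, real_inner_smul_right]
        have := (hfpcv i).2 (Set.mem_univ (x.2 i)) (Set.mem_univ (y.2 i)) ha hb hab
        simp only [smul_eq_mul] at this
        linarith
      calc lam i * (fp i ((a • x + b • y).2 i) - ⟪s i, (a • x + b • y).2 i⟫)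
          ≤ lam i * (a * (fp i (x.2 i) - ⟪s i, x.2 i⟫) + b * (fp i (y.2 i) - ⟪s i, y.2 i⟫)) :=
            mul_le_mul_of_nonneg_left h1 (hlamnn i)
        _ = a * (lam i * (fp i (x.2 i) - ⟪s i, x.2 i⟫))
            + b * (lam i * (fp i (y.2 i) - ⟪s i, y.2 i⟫)) := by ring
    have hsum := Finset.sum_le_sum (fun i (_ : i ∈ Finset.univ) => hi i)
    have he : a * Φ x + b * Φ y
        = (a * (f0p x.1 - ⟪s0, x.1⟫) + b * (f0p y.1 - ⟪s0, y.1⟫))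
          + ∑ i, (a * (lam i * (fp i (x.2 i) - ⟪s i, x.2 i⟫))
            + b * (lam i * (fp i (y.2 i) - ⟪s i, y.2 i⟫))) := by
      rw [hΦdef]
      simp only
      rw [Finset.sum_add_distrib, ← Finset.mul_sum, ← Finset.mul_sum]
      ring
    rw [he]
    have hΦc : Φ (a • x + b • y) = (f0p ((a • x + b • y).1) - ⟪s0, (a • x + b • y).1⟫)
        + ∑ i, lam i * (fp i ((a • x + b • y).2 i) - ⟪s i, (a • x + b • y).2 i⟫) := rfl
    rw [hΦc]
    exact add_le_add h0 hsum
  set CD : Set ((EuclideanSpace ℝ (Fin n)) × (Fin m → EuclideanSpace ℝ (Fin n))) :=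
    {q | q.1 ∈ W ∧ ∀ i, q.2 i = q.1} with hCDdef
  have hCDconv : Convex ℝ CD := by
    intro q hq q' hq' a b ha hb hab
    refine ⟨hWconv hq.1 hq'.1 ha hb hab, fun i => ?_⟩
    show a • (q.2 i) + b • (q'.2 i) = a • q.1 + b • q'.1
    rw [hq.2 i, hq'.2 i]
  have hxhmem : ((what, fun _ => what) :
      (EuclideanSpace ℝ (Fin n)) × (Fin m → EuclideanSpace ℝ (Fin n))) ∈ CD :=
    ⟨hwhatW, fun _ => rfl⟩
  have hxhmin : ∀ q ∈ CD, Φ (what, fun _ => what) ≤ Φ q := by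
    rintro q ⟨hqW, hqdiag⟩
    have hq : Φ q = (f0p q.1 - ⟪s0, q.1⟫) + ∑ i, lam i * (fp i q.1 - ⟪s i, q.1⟫) := by
      rw [hΦdef]
      simp only
      congr 1
      exact Finset.sum_congr rfl fun i _ => by rw [hqdiag i]
    rw [hq]
    exact hmin q.1 hqW
  obtain ⟨p, hpsub, hpnormal⟩ :=
    exists_subgrad_functional Φ hΦcont hΦconv CD hCDconv _ hxhmem hxhmin
  -- component functionals
  set p0 : EuclideanSpace ℝ (Fin n) →L[ℝ] ℝ :=
    p.comp (ContinuousLinearMap.inl ℝ (EuclideanSpace ℝ (Fin n)) (Fin m → EuclideanSpace ℝ (Fin n)))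
    with hp0def
  set SI : Fin m → (EuclideanSpace ℝ (Fin n)) →L[ℝ] (Fin m → EuclideanSpace ℝ (Fin n)) :=
    fun i => ContinuousLinearMap.pi (fun j =>
      if j = i then ContinuousLinearMap.id ℝ (EuclideanSpace ℝ (Fin n)) else 0) with hSIdef
  have hSI : ∀ i x, SI i x = Pi.single i x := by
    intro i x
    funext j
    rw [hSIdef]
    simp only [ContinuousLinearMap.pi_apply]
    by_cases hj : j = i
    · subst hj; simp
    · simp [hj, Pi.single_eq_of_ne hj]
  set pco : Fin m → (EuclideanSpace ℝ (Fin n)) →L[ℝ] ℝ := fun i =>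
    p.comp ((ContinuousLinearMap.inr ℝ (EuclideanSpace ℝ (Fin n))
      (Fin m → EuclideanSpace ℝ (Fin n))).comp (SI i)) with hpcodef
  have hpco : ∀ i x, pco i x = p (0, Pi.single i x) := by
    intro i x
    rw [hpcodef]
    simp only [ContinuousLinearMap.comp_apply, ContinuousLinearMap.inr_apply]
    rw [hSI]
  have hpq : ∀ q : (EuclideanSpace ℝ (Fin n)) × (Fin m → EuclideanSpace ℝ (Fin n)),
      p q = p0 q.1 + ∑ i, pco i (q.2 i) := by
    intro q
    have h1 : p ((q.1, 0)) = p0 q.1 := by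
      rw [hp0def]
      simp only [ContinuousLinearMap.comp_apply, ContinuousLinearMap.inl_apply]
    have h2 : p ((0, q.2)) = ∑ i, pco i (q.2 i) := by
      have e2 : ((0, q.2) : (EuclideanSpace ℝ (Fin n)) × (Fin m → EuclideanSpace ℝ (Fin n)))
          = ∑ i, ((0, Pi.single i (q.2 i)) :
            (EuclideanSpace ℝ (Fin n)) × (Fin m → EuclideanSpace ℝ (Fin n))) := by
        calc ((0, q.2) : (EuclideanSpace ℝ (Fin n)) × (Fin m → EuclideanSpace ℝ (Fin n)))
            = (ContinuousLinearMap.inr ℝ (EuclideanSpace ℝ (Fin n))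
                (Fin m → EuclideanSpace ℝ (Fin n))) q.2 := by simp
          _ = (ContinuousLinearMap.inr ℝ (EuclideanSpace ℝ (Fin n))
                (Fin m → EuclideanSpace ℝ (Fin n))) (∑ i, Pi.single i (q.2 i)) := by
              rw [Finset.univ_sum_single]
          _ = ∑ i, (ContinuousLinearMap.inr ℝ (EuclideanSpace ℝ (Fin n))
                (Fin m → EuclideanSpace ℝ (Fin n))) (Pi.single i (q.2 i)) := map_sum _ _ _
          _ = ∑ i, ((0, Pi.single i (q.2 i)) :
              (EuclideanSpace ℝ (Fin n)) × (Fin m → EuclideanSpace ℝ (Fin n))) := by simp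
      rw [e2, map_sum]
      exact Finset.sum_congr rfl fun i _ => (hpco i (q.2 i)).symm
    have hsplit : q = ((q.1, 0) : (EuclideanSpace ℝ (Fin n)) ×
        (Fin m → EuclideanSpace ℝ (Fin n))) + (0, q.2) := by simp
    calc p q = p ((q.1, 0) + ((0 : EuclideanSpace ℝ (Fin n)), q.2)) := by rw [← hsplit]
      _ = p ((q.1, 0)) + p ((0, q.2)) := map_add _ _ _
      _ = p0 q.1 + ∑ i, pco i (q.2 i) := by rw [h1, h2]
  -- Riesz representations
  set h0v : EuclideanSpace ℝ (Fin n) :=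
    (InnerProductSpace.toDual ℝ (EuclideanSpace ℝ (Fin n))).symm p0 with hh0def
  set hv : Fin m → EuclideanSpace ℝ (Fin n) :=
    fun i => (InnerProductSpace.toDual ℝ (EuclideanSpace ℝ (Fin n))).symm (pco i) with hhvdef
  have hh0 : ∀ x, ⟪h0v, x⟫ = p0 x := fun x => by
    rw [hh0def]; exact InnerProductSpace.toDual_symm_apply
  have hhv : ∀ i x, ⟪hv i, x⟫ = pco i x := fun i x => by
    rw [hhvdef]; exact InnerProductSpace.toDual_symm_apply
  -- subgradient for f0p
  have hu0 : IsSubgradientAt f0p what (h0v + s0) := by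
    intro v
    have hvp := hpsub (v, fun _ => what)
    have hdiff : ((v, fun _ => what) : (EuclideanSpace ℝ (Fin n)) ×
        (Fin m → EuclideanSpace ℝ (Fin n))) - (what, fun _ => what) = (v - what, 0) := by
      simp [Prod.ext_iff]
    rw [hdiff, hpq] at hvp
    simp only [Pi.zero_apply, map_zero, Finset.sum_const_zero, add_zero] at hvp
    have hΦ1 : Φ (v, fun _ => what) = (f0p v - ⟪s0, v⟫)
        + ∑ i, lam i * (fp i what - ⟪s i, what⟫) := rfl
    have hΦ2 : Φ (what, fun _ => what) = (f0p what - ⟪s0, what⟫)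
        + ∑ i, lam i * (fp i what - ⟪s i, what⟫) := rfl
    rw [hΦ1, hΦ2] at hvp
    have hip : ⟪h0v + s0, v - what⟫ = p0 (v - what) + ⟪s0, v - what⟫ := by
      rw [inner_add_left, hh0]
    have his : ⟪s0, v - what⟫ = ⟪s0, v⟫ - ⟪s0, what⟫ := inner_sub_right _ _ _
    rw [hip, his]
    linarith
  -- subgradients for fp i with the scaling property
  have hui : ∀ i, ∃ ui, IsSubgradientAt (fp i) what ui ∧ lam i • (ui - s i) = hv i := by
    intro i
    have hineq : ∀ vi, pco i (vi - what)
        ≤ lam i * ((fp i vi - ⟪s i, vi⟫) - (fp i what - ⟪s i, what⟫)) := by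
      intro vi
      have hvp := hpsub (what, Function.update (fun _ => what) i vi)
      have hdiff : ((what, Function.update (fun _ => what) i vi) :
          (EuclideanSpace ℝ (Fin n)) × (Fin m → EuclideanSpace ℝ (Fin n)))
          - (what, fun _ => what) = (0, Pi.single i (vi - what)) := by
        refine Prod.ext (by simp) ?_
        funext j
        by_cases hj : j = i
        · subst hj; simp [Function.update_self]
        · simp [Function.update_of_ne hj, Pi.single_eq_of_ne hj]
      rw [hdiff, hpq] at hvp
      simp only [map_zero, zero_add] at hvp
      have hsum1 : ∑ j, pco j ((Pi.single i (vi - what) : Fin m → EuclideanSpace ℝ (Fin n)) j)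
          = pco i (vi - what) := by
        have hz : ∀ j ∈ Finset.univ.erase i,
            pco j ((Pi.single i (vi - what) : Fin m → EuclideanSpace ℝ (Fin n)) j) = 0 := by
          intro j hj
          rw [Pi.single_eq_of_ne (Finset.ne_of_mem_erase hj), map_zero]
        rw [← Finset.sum_erase_add Finset.univ _ (Finset.mem_univ i),
          Finset.sum_eq_zero hz, Pi.single_eq_same, zero_add]
      rw [hsum1] at hvp
      have hΦ2 : Φ (what, fun _ => what) = (f0p what - ⟪s0, what⟫)
          + ∑ j, lam j * (fp j what - ⟪s j, what⟫) := rfl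
      have hΦupd : Φ (what, Function.update (fun _ => what) i vi)
          = (f0p what - ⟪s0, what⟫) + (∑ j, lam j * (fp j what - ⟪s j, what⟫)
            - lam i * (fp i what - ⟪s i, what⟫) + lam i * (fp i vi - ⟪s i, vi⟫)) := by
        have hfn : (fun j => lam j * (fp j (Function.update (fun _ => what) i vi j)
            - ⟪s j, Function.update (fun _ => what) i vi j⟫))
            = Function.update (fun j => lam j * (fp j what - ⟪s j, what⟫)) i
              (lam i * (fp i vi - ⟪s i, vi⟫)) := by
          funext j
          by_cases hj : j = i
          · subst hj; simp [Function.update_self]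
          · simp [Function.update_of_ne hj]
        have : Φ (what, Function.update (fun _ => what) i vi)
            = (f0p what - ⟪s0, what⟫) + ∑ j, (fun j => lam j * (fp j (Function.update
              (fun _ => what) i vi j) - ⟪s j, Function.update (fun _ => what) i vi j⟫)) j := rfl
        rw [this, hfn]
        congr 1
        rw [Finset.sum_update_of_mem (Finset.mem_univ i)]
        rw [← Finset.sum_erase_add Finset.univ _ (Finset.mem_univ i), Finset.erase_eq]
        ring
      rw [hΦ2, hΦupd] at hvp
      linarith
    rcases eq_or_lt_of_le (hlamnn i) with hlz | hlp
    · have hpz : ∀ x, pco i x = 0 := by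
        intro x
        have h1 := hineq (what + x)
        rw [add_sub_cancel_left, ← hlz, zero_mul] at h1
        have h2 := hineq (what - x)
        rw [← hlz, zero_mul] at h2
        have h3 : what - x - what = -x := by abel
        rw [h3, map_neg] at h2
        linarith
      obtain ⟨ui, hui⟩ := hsubex (fp i) (hfpc i) (hfpcv i)
      refine ⟨ui, hui, ?_⟩
      rw [← hlz, zero_smul]
      have hpcz : pco i = 0 := ContinuousLinearMap.ext hpz
      simp only [hhvdef, hpcz, map_zero]
    · refine ⟨(lam i)⁻¹ • hv i + s i, ?_, ?_⟩
      · intro v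
        have h1 := hineq v
        have h2 : ⟪(lam i)⁻¹ • hv i + s i, v - what⟫
            = (lam i)⁻¹ * (pco i (v - what)) + ⟪s i, v - what⟫ := by
          rw [inner_add_left, real_inner_smul_left, hhv]
        have h3 := mul_le_mul_of_nonneg_left h1 (inv_nonneg.2 (hlamnn i))
        rw [← mul_assoc, inv_mul_cancel₀ (ne_of_gt hlp), one_mul] at h3
        have h4 : ⟪s i, v - what⟫ = ⟪s i, v⟫ - ⟪s i, what⟫ := inner_sub_right _ _ _
        rw [h2, h4]
        linarith
      · rw [add_sub_cancel_right, smul_smul, mul_inv_cancel₀ (ne_of_gt hlp), one_smul]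
  choose u husub hulam using hui
  -- normal cone element
  refine ⟨h0v + s0, u, -(h0v + ∑ i, hv i), hu0, husub, ?_, ?_⟩
  · intro v hvW
    have hq := hpnormal (v, fun _ => v) ⟨hvW, fun i => rfl⟩
    have hdiff : ((v, fun _ => v) : (EuclideanSpace ℝ (Fin n)) ×
        (Fin m → EuclideanSpace ℝ (Fin n))) - (what, fun _ => what)
        = (v - what, fun _ => v - what) := by
      refine Prod.ext (by simp) ?_
      funext j
      simp
    rw [hdiff, hpq] at hq
    have hinn : ⟪-(h0v + ∑ i, hv i), v - what⟫
        = -(p0 (v - what) + ∑ i, pco i (v - what)) := by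
      rw [inner_neg_left, inner_add_left, hh0, sum_inner]
      congr 2
      exact Finset.sum_congr rfl fun i _ => hhv i _
    rw [hinn]
    simpa using neg_nonpos_of_nonneg hq
  · have hsl : ∑ i, lam i • (u i - s i) = ∑ i, hv i :=
      Finset.sum_congr rfl fun i _ => hulam i
    rw [add_sub_cancel_right, hsl]
    abel

set_option maxHeartbeats 1000000 in
/-- Lemma C.4, induced feasibility of IDCA: if the current iterate
`w^{(k)}` is feasible but not a nearly ε-KKT point, and `w^{(k+1)}` is an
`ε_k`-optimal solution of the convexified subproblem with
`ε_k = (μ/8)·min{1, 1/(4M²), μν/(8M⁴)}·ε²`, then `w^{(k+1)}` is feasible: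
`fᵢ(w^{(k+1)}) ≤ 0` for all `i`. -/
theorem idca_induced_feasibility {n m : ℕ} (μ M ν ε : ℝ)
    (hμ : 0 < μ) (hM : 0 < M) (hν : 0 < ν) (hε : 0 < ε)
    (W : Set (EuclideanSpace ℝ (Fin n))) (hWc : IsClosed W) (hWconv : Convex ℝ W)
    (f0p f0m : EuclideanSpace ℝ (Fin n) → ℝ)
    (fp fm : Fin m → EuclideanSpace ℝ (Fin n) → ℝ)
    -- Assumption A: strong convexity on ℝⁿ
    (hf0p : StrongConvexOn Set.univ μ f0p) (hf0m : StrongConvexOn Set.univ μ f0m)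
    (hfp : ∀ i, StrongConvexOn Set.univ μ (fp i))
    (hfm : ∀ i, StrongConvexOn Set.univ μ (fm i))
    -- Assumption D: M-Lipschitz continuity on W
    (hf0pL : LipschitzOnWith (Real.toNNReal M) f0p W)
    (hf0mL : LipschitzOnWith (Real.toNNReal M) f0m W)
    (hfpL : ∀ i, LipschitzOnWith (Real.toNNReal M) (fp i) W)
    (hfmL : ∀ i, LipschitzOnWith (Real.toNNReal M) (fm i) W)
    -- Assumption B: uniform Slater condition with margin ν
    (hslater : ∀ w ∈ W, (∀ i, fp i w - fm i w ≤ 0) →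
      ∀ s : Fin m → EuclideanSpace ℝ (Fin n),
        (∀ i, IsSubgradientAt (fm i) w (s i)) →
        ∃ v ∈ W, ∀ i, fp i v - fm i w - ⟪s i, v - w⟫ ≤ -ν)
    -- the current iterate w^{(k)} ∈ W, feasible
    (wk : EuclideanSpace ℝ (Fin n)) (hwkW : wk ∈ W)
    (hwkfeas : ∀ i, fp i wk - fm i wk ≤ 0)
    -- w^{(k)} is not a nearly ε-KKT point
    (hnotKKT : ¬ NearlyKKT W f0p f0m fp fm ε wk)
    -- subgradients of the concave parts at w^{(k)} and the convexified subproblem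
    (s0 : EuclideanSpace ℝ (Fin n)) (s : Fin m → EuclideanSpace ℝ (Fin n))
    (hs0 : IsSubgradientAt f0m wk s0) (hs : ∀ i, IsSubgradientAt (fm i) wk (s i))
    (g0 : EuclideanSpace ℝ (Fin n) → ℝ) (g : Fin m → EuclideanSpace ℝ (Fin n) → ℝ)
    (hg0 : ∀ v, g0 v = f0p v - f0m wk - ⟪s0, v - wk⟫)
    (hg : ∀ i v, g i v = fp i v - fm i wk - ⟪s i, v - wk⟫)
    -- ŵ^{(k+1)} is the optimal solution of the convexified subproblem
    (what : EuclideanSpace ℝ (Fin n)) (hwhatW : what ∈ W)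
    (hwhatfeas : ∀ i, g i what ≤ 0)
    (hwhatopt : ∀ v ∈ W, (∀ i, g i v ≤ 0) → g0 what ≤ g0 v)
    -- precision of the inexact subproblem solution
    (εk : ℝ)
    (hεk : εk = μ / 8 * min 1 (min (1 / (4 * M ^ 2)) (μ * ν / (8 * M ^ 4))) * ε ^ 2)
    -- w^{(k+1)} is an ε_k-optimal solution of the subproblem
    (wk1 : EuclideanSpace ℝ (Fin n)) (hwk1W : wk1 ∈ W)
    (hwk1gap : g0 wk1 - g0 what ≤ εk)
    (hwk1feas : ∀ i, g i wk1 ≤ εk) :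
    ∀ i, fp i wk1 - fm i wk1 ≤ 0 := by
  classical
  have hMnn : (0:ℝ) ≤ M := hM.le
  set c : ℝ := min 1 (min (1 / (4 * M ^ 2)) (μ * ν / (8 * M ^ 4))) with hcdef
  have hcpos : 0 < c := lt_min one_pos (lt_min (by positivity) (by positivity))
  have hc1 : c ≤ 1 := min_le_left _ _
  have hcM : c ≤ 1 / (4 * M ^ 2) := le_trans (min_le_right _ _) (min_le_left _ _)
  have hεkpos : 0 < εk := by
    rw [hεk]
    exact mul_pos (mul_pos (by positivity) hcpos) (by positivity)
  have hgwk : ∀ i, g i wk = fp i wk - fm i wk := by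
    intro i; rw [hg]; simp
  have hg0wk : g0 wk = f0p wk - f0m wk := by rw [hg0]; simp
  by_cases hbig : εk ≤ μ / 2 * ‖wk1 - wk‖ ^ 2
  · intro i
    have h1 := strong_subgrad (hfm i) (hs i) wk1
    have h2 := hwk1feas i
    rw [hg] at h2
    linarith
  · exfalso
    push_neg at hbig
    apply hnotKKT
    -- Slater point for the convexified problem
    obtain ⟨vs, hvsW, hvsineq⟩ := hslater wk hwkW hwkfeas s hs
    have hvs : ∀ i, g i vs ≤ -ν := by intro i; rw [hg]; exact hvsineq i
    -- strong convexity combination inequalities for the convexified functions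
    have gcombo : ∀ (F : EuclideanSpace ℝ (Fin n) → ℝ) (sv : EuclideanSpace ℝ (Fin n))
        (G : EuclideanSpace ℝ (Fin n) → ℝ) (cst : ℝ),
        StrongConvexOn Set.univ μ F → (∀ v, G v = F v - cst - ⟪sv, v - wk⟫) →
        ∀ x y : EuclideanSpace ℝ (Fin n), ∀ a b : ℝ, 0 ≤ a → 0 ≤ b → a + b = 1 →
        G (a • x + b • y) ≤ a * G x + b * G y - a * b * (μ / 2 * ‖x - y‖ ^ 2) := by
      intro F sv G cst hF hG x y a b ha hb hab
      have hcv := hF.2 (Set.mem_univ x) (Set.mem_univ y) ha hb hab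
      simp only [smul_eq_mul] at hcv
      have hwksum : a • x + b • y - wk = a • (x - wk) + b • (y - wk) := by
        have hw : a • wk + b • wk = wk := by rw [← add_smul, hab, one_smul]
        calc a • x + b • y - wk = a • x + b • y - (a • wk + b • wk) := by rw [hw]
          _ = a • (x - wk) + b • (y - wk) := by rw [smul_sub, smul_sub]; abel
      have hinner : ⟪sv, a • x + b • y - wk⟫ = a * ⟪sv, x - wk⟫ + b * ⟪sv, y - wk⟫ := by
        rw [hwksum, inner_add_right, real_inner_smul_right, real_inner_smul_right]
      rw [hG, hG, hG, hinner]
      have hcst : a * cst + b * cst = cst := by rw [← add_mul, hab, one_mul]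
      nlinarith [hcv]
    have hg0combo := gcombo f0p s0 g0 (f0m wk) hf0p hg0
    have hgcombo : ∀ i, ∀ x y : EuclideanSpace ℝ (Fin n), ∀ a b : ℝ,
        0 ≤ a → 0 ≤ b → a + b = 1 →
        g i (a • x + b • y) ≤ a * g i x + b * g i y - a * b * (μ / 2 * ‖x - y‖ ^ 2) :=
      fun i => gcombo (fp i) (s i) (g i) (fm i wk) (hfp i) (hg i)
    have hg0conv : ∀ x y : EuclideanSpace ℝ (Fin n), ∀ a b : ℝ, 0 ≤ a → 0 ≤ b → a + b = 1 →
        g0 (a • x + b • y) ≤ a * g0 x + b * g0 y := by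
      intro x y a b ha hb hab
      have h := hg0combo x y a b ha hb hab
      nlinarith [sq_nonneg ‖x - y‖, mul_nonneg (mul_nonneg ha hb) (mul_nonneg (by linarith : (0:ℝ) ≤ μ / 2) (sq_nonneg ‖x - y‖))]
    have hgconv : ∀ i, ∀ x y : EuclideanSpace ℝ (Fin n), ∀ a b : ℝ, 0 ≤ a → 0 ≤ b → a + b = 1 →
        g i (a • x + b • y) ≤ a * g i x + b * g i y := by
      intro i x y a b ha hb hab
      have h := hgcombo i x y a b ha hb hab
      nlinarith [mul_nonneg (mul_nonneg ha hb) (mul_nonneg (by linarith : (0:ℝ) ≤ μ / 2) (sq_nonneg ‖x - y‖))]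
    have hmain := kkt_multipliers hWconv g0 g hg0conv hgconv hwhatW hwhatfeas
      hwhatopt hν hvsW hvs
    obtain ⟨lam, hlamnn, hcs, hLmin⟩ := hmain
    set S : ℝ := ∑ i, lam i with hSdef
    have hS : 0 ≤ S := Finset.sum_nonneg fun i _ => hlamnn i
    set L : EuclideanSpace ℝ (Fin n) → ℝ := fun v => g0 v + ∑ i, lam i * g i v with hLdef
    have hLwhat : L what = g0 what := by
      rw [hLdef]
      simp only
      rw [Finset.sum_eq_zero fun i _ => hcs i, add_zero]
    have hLcombo : ∀ x y : EuclideanSpace ℝ (Fin n), ∀ a b : ℝ, 0 ≤ a → 0 ≤ b → a + b = 1 →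
        L (a • x + b • y) ≤ a * L x + b * L y
          - a * b * ((μ * (1 + S)) / 2 * ‖x - y‖ ^ 2) := by
      intro x y a b ha hb hab
      have h0 := hg0combo x y a b ha hb hab
      have h1 : ∑ i, lam i * g i (a • x + b • y)
          ≤ ∑ i, lam i * (a * g i x + b * g i y - a * b * (μ / 2 * ‖x - y‖ ^ 2)) :=
        Finset.sum_le_sum fun i _ =>
          mul_le_mul_of_nonneg_left (hgcombo i x y a b ha hb hab) (hlamnn i)
      have h2 : ∑ i, lam i * (a * g i x + b * g i y - a * b * (μ / 2 * ‖x - y‖ ^ 2))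
          = a * ∑ i, lam i * g i x + b * ∑ i, lam i * g i y
            - a * b * (μ / 2 * ‖x - y‖ ^ 2) * S := by
        rw [hSdef, Finset.mul_sum, Finset.mul_sum, Finset.mul_sum]
        rw [← Finset.sum_add_distrib, ← Finset.sum_sub_distrib]
        exact Finset.sum_congr rfl fun i _ => by ring
      have hfinal : a * L x + b * L y - a * b * ((μ * (1 + S)) / 2 * ‖x - y‖ ^ 2)
          = (a * g0 x + b * g0 y - a * b * (μ / 2 * ‖x - y‖ ^ 2))
            + (a * (∑ i, lam i * g i x) + b * (∑ i, lam i * g i y)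
              - a * b * (μ / 2 * ‖x - y‖ ^ 2) * S) := by
        simp only [hLdef]
        ring
      have hcombL : L (a • x + b • y)
          = g0 (a • x + b • y) + ∑ i, lam i * g i (a • x + b • y) := rfl
      rw [hcombL, hfinal]
      linarith
    have hLminW : ∀ v ∈ W, L what ≤ L v := by
      intro v hv
      rw [hLwhat]
      exact hLmin v hv
    have hLgrow := lagrangian_growth hWconv (μ * (1 + S)) L hLcombo hwhatW hLminW
    have hLwk1 : L wk1 ≤ L what + (1 + S) * εk := by
      have hgb : ∑ i, lam i * g i wk1 ≤ ∑ i, lam i * εk :=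
        Finset.sum_le_sum fun i _ => mul_le_mul_of_nonneg_left (hwk1feas i) (hlamnn i)
      have hsum : ∑ i, lam i * εk = S * εk := by rw [hSdef, ← Finset.sum_mul]
      have hLv : L wk1 = g0 wk1 + ∑ i, lam i * g i wk1 := rfl
      rw [hLv, hLwhat]
      linarith
    clear_value S L
    have hb2 : ‖wk1 - what‖ ^ 2 ≤ 2 * εk / μ := by
      have hgrow := hLgrow wk1 hwk1W
      have hid : (μ * (1 + S)) / 2 * ‖wk1 - what‖ ^ 2
          = (1 + S) * (μ / 2 * ‖wk1 - what‖ ^ 2) := by ring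
      have h4 : (1 + S) * (μ / 2 * ‖wk1 - what‖ ^ 2) ≤ (1 + S) * εk := by
        nlinarith [hgrow, hLwk1, hid]
      have h5 : μ / 2 * ‖wk1 - what‖ ^ 2 ≤ εk :=
        le_of_mul_le_mul_left h4 (by linarith)
      rw [le_div_iff₀ hμ]
      linarith
    set dd : ℝ := ‖what - wk‖ with hdd
    have hddnn : 0 ≤ dd := norm_nonneg _
    have hb2' : μ * ‖wk1 - what‖ ^ 2 ≤ 2 * εk := by
      have h := hb2
      rw [le_div_iff₀ hμ] at h
      linarith
    have hr2' : μ * ‖wk1 - wk‖ ^ 2 < 2 * εk := by linarith [hbig]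
    have htri : dd ≤ ‖what - wk1‖ + ‖wk1 - wk‖ := by
      calc dd = ‖(what - wk1) + (wk1 - wk)‖ := by rw [hdd]; congr 1; abel
        _ ≤ ‖what - wk1‖ + ‖wk1 - wk‖ := norm_add_le _ _
    have hsymn : ‖what - wk1‖ = ‖wk1 - what‖ := norm_sub_rev _ _
    rw [hsymn] at htri
    have h1 : dd ^ 2 ≤ (‖wk1 - what‖ + ‖wk1 - wk‖) ^ 2 :=
      pow_le_pow_left₀ hddnn htri 2
    have h2 : (‖wk1 - what‖ + ‖wk1 - wk‖) ^ 2
        ≤ 2 * ‖wk1 - what‖ ^ 2 + 2 * ‖wk1 - wk‖ ^ 2 := by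
      nlinarith [sq_nonneg (‖wk1 - what‖ - ‖wk1 - wk‖)]
    have hd2c : dd ^ 2 < c * ε ^ 2 := by
      have hμd : μ * dd ^ 2 < 8 * εk := by
        nlinarith [h1, h2, hb2', hr2', hμ]
      have h8 : 8 * εk = μ * (c * ε ^ 2) := by rw [hεk]; ring
      exact lt_of_mul_lt_mul_left (by linarith : μ * dd ^ 2 < μ * (c * ε ^ 2)) hμ.le
    have hdε : dd ≤ ε := by
      by_contra hgt
      push_neg at hgt
      have h1 : ε ^ 2 < dd ^ 2 := by nlinarith
      have h2 : c * ε ^ 2 ≤ 1 * ε ^ 2 := mul_le_mul_of_nonneg_right hc1 (sq_nonneg ε)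
      linarith
    have h2Md : 2 * M * dd ≤ ε := by
      have hc4 : 4 * M ^ 2 * c ≤ 1 := by
        have h := mul_le_mul_of_nonneg_left hcM (by positivity : (0:ℝ) ≤ 4 * M ^ 2)
        rwa [mul_one_div, div_self (by positivity : (4:ℝ) * M ^ 2 ≠ 0)] at h
      have hsq : (2 * M * dd) ^ 2 ≤ ε ^ 2 := by
        have e1 : 4 * M ^ 2 * dd ^ 2 ≤ 4 * M ^ 2 * (c * ε ^ 2) :=
          mul_le_mul_of_nonneg_left hd2c.le (by positivity)
        have e2 : 4 * M ^ 2 * c * ε ^ 2 ≤ 1 * ε ^ 2 :=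
          mul_le_mul_of_nonneg_right hc4 (sq_nonneg ε)
        nlinarith
      by_contra hgt
      push_neg at hgt
      have : ε ^ 2 < (2 * M * dd) ^ 2 := by nlinarith
      linarith
    -- Lipschitz estimates
    have hMcoe : ((Real.toNNReal M : NNReal) : ℝ) = M := Real.coe_toNNReal M hMnn
    have hdw : dist wk what = dd := by rw [hdd, dist_eq_norm, norm_sub_rev]
    have hlipf0p : f0p wk - f0p what ≤ M * dd := by
      have h := hf0pL.dist_le_mul wk hwkW what hwhatW
      rw [hMcoe, Real.dist_eq, hdw] at h
      calc f0p wk - f0p what ≤ |f0p wk - f0p what| := le_abs_self _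
        _ ≤ M * dd := h
    have hlipf0m : f0m what - f0m wk ≤ M * dd := by
      have h := hf0mL.dist_le_mul what hwhatW wk hwkW
      rw [hMcoe, Real.dist_eq] at h
      have hdw2 : dist what wk = dd := by rw [hdd, dist_eq_norm]
      rw [hdw2] at h
      calc f0m what - f0m wk ≤ |f0m what - f0m wk| := le_abs_self _
        _ ≤ M * dd := h
    have hg0d : g0 wk - g0 what ≤ 2 * M * dd := by
      have hinner0 : ⟪s0, what - wk⟫ ≤ f0m what - f0m wk := by
        have := hs0 what
        linarith
      rw [hg0wk, hg0 what]
      linarith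
    have hLwklb := hLmin wk hwkW
    have hcsb : ∀ i, |lam i * (fp i wk - fm i wk)| ≤ ε := by
      intro i
      have hterm : lam i * (fp i wk - fm i wk) ≤ 0 :=
        mul_nonpos_of_nonneg_of_nonpos (hlamnn i) (hwkfeas i)
      rw [abs_of_nonpos hterm, ← hgwk i]
      have hothers : ∀ j ∈ Finset.univ.erase i, lam j * g j wk ≤ 0 := fun j _ =>
        mul_nonpos_of_nonneg_of_nonpos (hlamnn j) (by rw [hgwk j]; exact hwkfeas j)
      have hsplit : ∑ j, lam j * g j wk
          = lam i * g i wk + ∑ j ∈ Finset.univ.erase i, lam j * g j wk :=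
        (Finset.add_sum_erase _ _ (Finset.mem_univ i)).symm
      have hsum_nonpos : ∑ j ∈ Finset.univ.erase i, lam j * g j wk ≤ 0 :=
        Finset.sum_nonpos hothers
      linarith [hLwklb, hg0d, h2Md, hsplit, hsum_nonpos]
    -- continuity and convexity of the convex parts
    have hf0pcv : ConvexOn ℝ Set.univ f0p :=
      hf0p.convexOn fun r => mul_nonneg (by linarith) (sq_nonneg r)
    have hfpcv : ∀ i, ConvexOn ℝ Set.univ (fp i) := fun i =>
      (hfp i).convexOn fun r => mul_nonneg (by linarith) (sq_nonneg r)
    have hf0pc : Continuous f0p := by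
      rw [← continuousOn_univ]
      exact hf0pcv.continuousOn isOpen_univ
    have hfpc : ∀ i, Continuous (fp i) := fun i => by
      rw [← continuousOn_univ]
      exact (hfpcv i).continuousOn isOpen_univ
    -- minimality of the shifted Lagrangian
    have hK : ∀ v : EuclideanSpace ℝ (Fin n), (f0p v - ⟪s0, v⟫)
        + ∑ i, lam i * (fp i v - ⟪s i, v⟫)
        = (g0 v + ∑ i, lam i * g i v)
          + ((f0m wk - ⟪s0, wk⟫) + ∑ i, lam i * (fm i wk - ⟪s i, wk⟫)) := by
      intro v
      have e0 : f0p v - ⟪s0, v⟫ = g0 v + (f0m wk - ⟪s0, wk⟫) := by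
        rw [hg0, inner_sub_right]
        ring
      have ei : ∀ i, lam i * (fp i v - ⟪s i, v⟫)
          = lam i * g i v + lam i * (fm i wk - ⟪s i, wk⟫) := by
        intro i
        rw [hg, inner_sub_right]
        ring
      rw [e0, Finset.sum_congr rfl fun i _ => ei i, Finset.sum_add_distrib]
      ring
    have hmin2 : ∀ v ∈ W, (f0p what - ⟪s0, what⟫)
        + ∑ i, lam i * (fp i what - ⟪s i, what⟫)
        ≤ (f0p v - ⟪s0, v⟫) + ∑ i, lam i * (fp i v - ⟪s i, v⟫) := by
      intro v hv
      rw [hK what, hK v]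
      have h1 := hLmin v hv
      have h2 : ∑ i, lam i * g i what = 0 := Finset.sum_eq_zero fun i _ => hcs i
      linarith
    obtain ⟨u0v, u, nWv, hu0v, huS, hnW, hstat⟩ := kkt_stationarity hWconv f0p fp
      hf0pc hfpc hf0pcv hfpcv s0 s lam hlamnn hwhatW hmin2
    exact ⟨hwkW, what, hwhatW, hdε, u0v, u, s0, s, nWv, lam, hu0v, huS, hs0, hs, hnW,
      hlamnn, by rw [hstat, norm_zero]; exact hε.le,
      fun i => le_trans (hwkfeas i) hε.le, hcsb⟩
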